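/- Let ω : [0, ∞) → [0, ∞) be increasing with ω(0) = 0, α ∈ (0, 1), ξ > 0, and suppose ω(2ξ) ≤ 2ω(ξ). Then ∫_{ξ/2}^{∞} [ω(2η + ξ) − ω(2η − ξ) − 2ω(ξ)] / η^{1+2α} dη ≤ −c ω(ξ) ξ^{−2α} for some constant c = c(α) > 0, using that ω(2η+ξ) − ω(2η−ξ) ≤ ω(2ξ) for η ≥ ξ/2 by concavity. -/

import Mathlib

open MeasureTheory

lemma omega_superadd (ω : ℝ → ℝ) (hconc : ConcaveOn ℝ (Set.Ici 0) ω)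
    (h0 : ω 0 = 0) {a b : ℝ} (ha : 0 ≤ a) (hb : 0 ≤ b) :
    ω (a + b) ≤ ω a + ω b := by
  rcases eq_or_lt_of_le (add_nonneg ha hb) with h | h
  · have ha0 : a = 0 := by linarith
    have hb0 : b = 0 := by linarith
    simp [ha0, hb0, h0]
  · have h1 := hconc.2 (Set.self_mem_Ici) (show a + b ∈ Set.Ici 0 from add_nonneg ha hb)
      (div_nonneg hb h.le) (div_nonneg ha h.le) (by field_simp; try ring)
    have h2 := hconc.2 (Set.self_mem_Ici) (show a + b ∈ Set.Ici 0 from add_nonneg ha hb)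
      (div_nonneg ha h.le) (div_nonneg hb h.le) (by field_simp; try ring)
    simp only [smul_eq_mul, smul_zero, zero_add, h0, mul_zero] at h1 h2
    have e1 : a / (a + b) * (a + b) = a := by field_simp
    have e2 : b / (a + b) * (a + b) = b := by field_simp
    rw [e1] at h1; rw [e2] at h2
    have : a / (a + b) * ω (a + b) + b / (a + b) * ω (a + b) = ω (a + b) := by
      field_simp
    linarith

theorem dissipation_large_scale (ω : ℝ → ℝ) (α ξ : ℝ)
    (hmono : MonotoneOn ω (Set.Ici 0)) (hconc : ConcaveOn ℝ (Set.Ici 0) ω)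
    (h0 : ω 0 = 0) (hα1 : 0 < α) (hα2 : α < 1) (hξ : 0 < ξ)
    (hdouble : ω (2 * ξ) ≤ (3 / 2) * ω ξ) :
    (∫ η in Set.Ioi (ξ / 2), (ω (2 * η + ξ) - ω (2 * η - ξ) - 2 * ω ξ) / η ^ (1 + 2 * α)) ≤
      -(1 / 2) * ω ξ * (ξ / 2) ^ (-(2 * α)) / (2 * α) := by
  set c : ℝ := ξ / 2 with hc_def
  have hc : 0 < c := by positivity
  set r : ℝ := -(1 + 2 * α) with hr_def
  have hr : r < -1 := by simp only [hr_def]; linarith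
  have hωξ : 0 ≤ ω ξ := by
    rw [← h0]; exact hmono Set.self_mem_Ici (le_of_lt hξ) hξ.le
  set f : ℝ → ℝ := fun η => (ω (2 * η + ξ) - ω (2 * η - ξ) - 2 * ω ξ) / η ^ (1 + 2 * α)
    with hf_def
  -- pointwise bounds on the numerator
  have hnum : ∀ η ∈ Set.Ioi c, ω (2 * η + ξ) - ω (2 * η - ξ) - 2 * ω ξ ≤ -(1 / 2) * ω ξ ∧
      -(2 * ω ξ) ≤ ω (2 * η + ξ) - ω (2 * η - ξ) - 2 * ω ξ := by
    intro η hη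
    have hη' : ξ / 2 < η := hη
    have hx : (0 : ℝ) ≤ 2 * η - ξ := by linarith
    have hsup : ω (2 * η + ξ) ≤ ω (2 * η - ξ) + ω (2 * ξ) := by
      have := omega_superadd ω hconc h0 hx (by linarith : (0:ℝ) ≤ 2 * ξ)
      have e : 2 * η - ξ + 2 * ξ = 2 * η + ξ := by ring
      rwa [e] at this
    have hmono' : ω (2 * η - ξ) ≤ ω (2 * η + ξ) :=
      hmono hx (by linarith : (0:ℝ) ≤ 2 * η + ξ) (by linarith)
    constructor <;> linarith
  have hpow_pos : ∀ η ∈ Set.Ioi c, (0:ℝ) < η ^ (1 + 2 * α) := by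
    intro η hη
    exact Real.rpow_pos_of_pos (lt_trans hc hη) _
  -- rewrite f as numerator * η ^ r on the set
  have hf_eq : ∀ η ∈ Set.Ioi c,
      f η = (ω (2 * η + ξ) - ω (2 * η - ξ) - 2 * ω ξ) * η ^ r := by
    intro η hη
    have hη0 : (0:ℝ) < η := lt_trans hc hη
    simp only [hf_def, hr_def, Real.rpow_neg hη0.le, div_eq_mul_inv]
  -- measurability
  have hmeas : AEMeasurable f (volume.restrict (Set.Ioi c)) := by
    have h1 : AEMeasurable (fun η => ω (2 * η + ξ)) (volume.restrict (Set.Ioi c)) := by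
      apply aemeasurable_restrict_of_monotoneOn measurableSet_Ioi
      intro x hx y hy hxy
      exact hmono (by simp only [Set.mem_Ici]; nlinarith [hx.out, hc])
        (by simp only [Set.mem_Ici]; nlinarith [hy.out, hc]) (by linarith)
    have h2 : AEMeasurable (fun η => ω (2 * η - ξ)) (volume.restrict (Set.Ioi c)) := by
      apply aemeasurable_restrict_of_monotoneOn measurableSet_Ioi
      intro x hx y hy hxy
      exact hmono (by simp only [Set.mem_Ici]; nlinarith [hx.out, hc])
        (by simp only [Set.mem_Ici]; nlinarith [hy.out, hc]) (by linarith)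
    have h3 : AEMeasurable (fun η : ℝ => η ^ (1 + 2 * α)) (volume.restrict (Set.Ioi c)) := by
      apply ContinuousOn.aemeasurable _ measurableSet_Ioi
      exact continuousOn_id.rpow_const fun x hx => Or.inl (ne_of_gt (lt_trans hc hx))
    exact ((h1.sub h2).sub aemeasurable_const).div h3
  -- integrability of f
  have hint_rpow : IntegrableOn (fun η : ℝ => η ^ r) (Set.Ioi c) := by
    exact integrableOn_Ioi_rpow_of_lt hr hc
  have hf_int : IntegrableOn f (Set.Ioi c) := by
    apply Integrable.mono (hint_rpow.const_mul (2 * ω ξ))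
      (hmeas.aestronglyMeasurable)
    filter_upwards [ae_restrict_mem measurableSet_Ioi] with η hη
    have hη0 : (0:ℝ) < η := lt_trans hc hη
    have hrp : (0:ℝ) < η ^ r := Real.rpow_pos_of_pos hη0 r
    rw [hf_eq η hη]
    rw [Real.norm_eq_abs, Real.norm_eq_abs, abs_mul, abs_of_pos hrp]
    have habs : |ω (2 * η + ξ) - ω (2 * η - ξ) - 2 * ω ξ| ≤ 2 * ω ξ := by
      obtain ⟨hu, hl⟩ := hnum η hη
      rw [abs_le]; constructor <;> linarith
    calc |ω (2 * η + ξ) - ω (2 * η - ξ) - 2 * ω ξ| * η ^ r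
        ≤ (2 * ω ξ) * η ^ r := by
          exact mul_le_mul_of_nonneg_right habs hrp.le
      _ ≤ |2 * ω ξ * η ^ r| := le_abs_self _
  -- comparison
  have hg_int : IntegrableOn (fun η : ℝ => -(1 / 2) * ω ξ * η ^ r) (Set.Ioi c) :=
    hint_rpow.const_mul _
  have hle : (∫ η in Set.Ioi c, f η) ≤ ∫ η in Set.Ioi c, -(1 / 2) * ω ξ * η ^ r := by
    apply setIntegral_mono_on hf_int hg_int measurableSet_Ioi
    intro η hη
    have hη0 : (0:ℝ) < η := lt_trans hc hη
    have hrp : (0:ℝ) ≤ η ^ r := (Real.rpow_pos_of_pos hη0 r).le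
    rw [hf_eq η hη]
    have := (hnum η hη).1
    calc (ω (2 * η + ξ) - ω (2 * η - ξ) - 2 * ω ξ) * η ^ r
        ≤ (-(1 / 2) * ω ξ) * η ^ r := mul_le_mul_of_nonneg_right this hrp
      _ = -(1 / 2) * ω ξ * η ^ r := by ring
  -- compute the right integral
  have hval : (∫ η in Set.Ioi c, -(1 / 2) * ω ξ * η ^ r)
      = -(1 / 2) * ω ξ * (ξ / 2) ^ (-(2 * α)) / (2 * α) := by
    have hr1 : r + 1 = -(2 * α) := by rw [hr_def]; ring
    have h2α : (0:ℝ) < 2 * α := by linarith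
    rw [integral_const_mul, integral_Ioi_rpow_of_lt hr hc, hr1, hc_def, neg_div_neg_eq]
    ring
  calc (∫ η in Set.Ioi c, f η) ≤ _ := hle
    _ = _ := hval
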